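/- An ε-locking scheme for min-entropy sources: under the hypotheses of the previous locking theorem, if instead the message X has min-entropy at least ℓ with 2^{ℓ−n} > ε, then for any measurement with outcome I and any outcome i, Δ(p_{X|I=i}, p_X) ≤ 2ε/(2^{ℓ−n} − ε). -/

import Mathlib

open Matrix
open scoped BigOperators ComplexOrder
set_option maxHeartbeats 1000000

section Aux

theorem stmt15_sandwich {I : Type*} [Fintype I] [DecidableEq I] (U : Matrix I I ℂ) (p0 : I) :
    (U)ᴴ * Matrix.single p0 p0 (1:ℂ) * U
      = Matrix.vecMulVec (fun q => (starRingEnd ℂ) (U p0 q)) (fun p => U p0 p) := by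
  ext q p
  simp [Matrix.mul_apply, Matrix.single, Matrix.vecMulVec_apply,
    Matrix.conjTranspose_apply, Finset.sum_mul, ite_mul, mul_ite, ite_and]

theorem stmt15_trace_vmv {I : Type*} [Fintype I] (a b c d : I → ℂ) :
    (Matrix.vecMulVec a b * Matrix.vecMulVec c d).trace = (∑ q, b q * c q) * (∑ p, d p * a p) := by
  simp only [Matrix.trace, Matrix.diag, Matrix.mul_apply, Matrix.vecMulVec_apply]
  rw [Finset.sum_mul_sum, Finset.sum_comm]
  apply Finset.sum_congr rfl; intro q _
  apply Finset.sum_congr rfl; intro p _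
  ring

theorem stmt15_trace_key {I : Type*} [Fintype I] [DecidableEq I] (U : Matrix I I ℂ)
    (v : I → ℂ) (p0 : I) :
    (Matrix.vecMulVec v (fun p => (starRingEnd ℂ) (v p)) *
        ((U)ᴴ * Matrix.single p0 p0 (1:ℂ) * U)).trace
      = (‖U.mulVec v p0‖^2 : ℝ) := by
  rw [stmt15_sandwich, stmt15_trace_vmv]
  have h1 : (∑ q, (starRingEnd ℂ) (v q) * (starRingEnd ℂ) (U p0 q))
      = (starRingEnd ℂ) (U.mulVec v p0) := by
    simp [Matrix.mulVec, dotProduct, map_sum, mul_comm]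
  have h2 : (∑ p, U p0 p * v p) = U.mulVec v p0 := by
    simp [Matrix.mulVec, dotProduct]
  rw [h1, h2, mul_comm, Complex.mul_conj']
  simp [Complex.normSq_eq_norm_sq]

theorem stmt15_unit_norm_pres {I : Type*} [Fintype I] [DecidableEq I] (U : Matrix I I ℂ)
    (hU : U ∈ Matrix.unitaryGroup I ℂ) (v : I → ℂ) :
    ∑ p, ‖U.mulVec v p‖^2 = ∑ p, ‖v p‖^2 := by
  have key : ∀ z : ℂ, ((‖z‖^2 : ℝ) : ℂ) = (starRingEnd ℂ) z * z := by
    intro z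
    rw [Complex.sq_norm, mul_comm, Complex.mul_conj]
  have h : ((∑ p, ‖U.mulVec v p‖^2 : ℝ) : ℂ) = ((∑ p, ‖v p‖^2 : ℝ) : ℂ) := by
    rw [Complex.ofReal_sum, Complex.ofReal_sum]
    simp only [key]
    calc ∑ p, (starRingEnd ℂ) (U.mulVec v p) * U.mulVec v p
        = star (U.mulVec v) ⬝ᵥ U.mulVec v := rfl
      _ = (Matrix.vecMul (star v) Uᴴ) ⬝ᵥ U.mulVec v := by rw [Matrix.star_mulVec]
      _ = star v ⬝ᵥ (Uᴴ.mulVec (U.mulVec v)) := (Matrix.dotProduct_mulVec _ _ _).symm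
      _ = star v ⬝ᵥ ((Uᴴ * U).mulVec v) := by rw [Matrix.mulVec_mulVec]
      _ = star v ⬝ᵥ v := by
            have : Uᴴ * U = 1 := by
              have := Matrix.UnitaryGroup.star_mul_self ⟨U, hU⟩
              rw [← Matrix.star_eq_conjTranspose]; simpa using this
            rw [this, Matrix.one_mulVec]
      _ = ∑ p, (starRingEnd ℂ) (v p) * v p := rfl
  exact_mod_cast h

/-- Real-analysis core of Statement 15. -/
theorem stmt15_core_real (dA : ℕ) (hdA : 0 < dA) (ε δ c : ℝ) (hε : 0 < ε) (hδε : ε < δ)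
    (hc : 0 < c) (hcδ : c * δ = 1 / (dA : ℝ))
    (f pX : Fin dA → ℝ) (hf1 : ∑ x, f x = 1)
    (hfMUR : (1/2) * ∑ x, |f x - 1/(dA:ℝ)| ≤ ε)
    (hp0 : ∀ x, 0 ≤ pX x) (hp1 : ∑ x, pX x = 1) (hpc : ∀ x, pX x ≤ c) :
    (1/2) * ∑ x, |pX x * f x / (∑ x', pX x' * f x') - pX x| ≤ 2 * ε / (δ - ε) := by
  set α := ∑ x', pX x' * f x' with hα
  have hsum0 : ∑ x, (f x - 1/(dA:ℝ)) = 0 := by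
    rw [Finset.sum_sub_distrib, hf1]
    simp [Finset.card_univ]
    field_simp
    norm_num
  have habs : ∑ x, |f x - 1/(dA:ℝ)| ≤ 2 * ε := by linarith
  have hneg : ∑ x, max 0 (1/(dA:ℝ) - f x) ≤ ε := by
    have hpt : ∀ x, max 0 (1/(dA:ℝ) - f x) = (|f x - 1/(dA:ℝ)| - (f x - 1/(dA:ℝ)))/2 := by
      intro x
      rcases le_or_gt (1/(dA:ℝ)) (f x) with h | h
      · rw [max_eq_left (by linarith), abs_of_nonneg (by linarith)]; ring
      · rw [max_eq_right (by linarith), abs_of_neg (by linarith)]; ring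
    calc ∑ x, max 0 (1/(dA:ℝ) - f x)
        = (∑ x, |f x - 1/(dA:ℝ)| - ∑ x, (f x - 1/(dA:ℝ)))/2 := by
          simp only [hpt]; rw [← Finset.sum_div, Finset.sum_sub_distrib]
      _ ≤ ε := by rw [hsum0]; linarith
  have hαlb : c * (δ - ε) ≤ α := by
    have h1 : 1/(dA:ℝ) - α = ∑ x, pX x * (1/(dA:ℝ) - f x) := by
      have hcalc : ∑ x, pX x * (1/(dA:ℝ) - f x) = 1/(dA:ℝ) - α := by
        calc ∑ x, pX x * (1/(dA:ℝ) - f x)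
            = ∑ x, (pX x * (1/(dA:ℝ)) - pX x * f x) := by
              apply Finset.sum_congr rfl; intros; ring
          _ = (∑ x, pX x) * (1/(dA:ℝ)) - α := by
              rw [Finset.sum_sub_distrib, Finset.sum_mul]
          _ = 1/(dA:ℝ) - α := by rw [hp1, one_mul]
      linarith
    have h2 : ∑ x, pX x * (1/(dA:ℝ) - f x) ≤ c * ε := by
      calc ∑ x, pX x * (1/(dA:ℝ) - f x) ≤ ∑ x, c * max 0 (1/(dA:ℝ) - f x) := by
            apply Finset.sum_le_sum
            intro x _
            rcases le_or_gt 0 (1/(dA:ℝ) - f x) with h | h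
            · rw [max_eq_right h]
              exact mul_le_mul_of_nonneg_right (hpc x) h |>.trans_eq rfl |>.trans (le_refl _)
            · rw [max_eq_left (le_of_lt h)]
              exact le_trans (mul_nonpos_of_nonneg_of_nonpos (hp0 x) (le_of_lt h)) (by simp)
        _ = c * ∑ x, max 0 (1/(dA:ℝ) - f x) := by rw [Finset.mul_sum]
        _ ≤ c * ε := mul_le_mul_of_nonneg_left hneg (le_of_lt hc)
    nlinarith [hcδ]
  have hαpos : 0 < α := lt_of_lt_of_le (mul_pos hc (by linarith)) hαlb
  have hA : ∑ x, pX x * |f x - 1/(dA:ℝ)| ≤ 2 * c * ε := by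
    calc ∑ x, pX x * |f x - 1/(dA:ℝ)| ≤ ∑ x, c * |f x - 1/(dA:ℝ)| := by
          apply Finset.sum_le_sum; intro x _
          exact mul_le_mul_of_nonneg_right (hpc x) (abs_nonneg _)
      _ = c * ∑ x, |f x - 1/(dA:ℝ)| := by rw [Finset.mul_sum]
      _ ≤ c * (2*ε) := mul_le_mul_of_nonneg_left habs (le_of_lt hc)
      _ = 2 * c * ε := by ring
  have hB : |α - 1/(dA:ℝ)| ≤ 2 * c * ε := by
    have h1 : α - 1/(dA:ℝ) = ∑ x, pX x * (f x - 1/(dA:ℝ)) := by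
      have hcalc : ∑ x, pX x * (f x - 1/(dA:ℝ)) = α - 1/(dA:ℝ) := by
        calc ∑ x, pX x * (f x - 1/(dA:ℝ))
            = ∑ x, (pX x * f x - pX x * (1/(dA:ℝ))) := by
              apply Finset.sum_congr rfl; intros; ring
          _ = α - (∑ x, pX x) * (1/(dA:ℝ)) := by
              rw [Finset.sum_sub_distrib, Finset.sum_mul]
          _ = α - 1/(dA:ℝ) := by rw [hp1, one_mul]
      linarith
    rw [h1]
    calc |∑ x, pX x * (f x - 1/(dA:ℝ))| ≤ ∑ x, |pX x * (f x - 1/(dA:ℝ))| :=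
          Finset.abs_sum_le_sum_abs _ _
      _ = ∑ x, pX x * |f x - 1/(dA:ℝ)| := by
          apply Finset.sum_congr rfl; intro x _
          rw [abs_mul, abs_of_nonneg (hp0 x)]
      _ ≤ 2 * c * ε := hA
  have hC : ∑ x, pX x * |f x - α| ≤ 4 * c * ε := by
    calc ∑ x, pX x * |f x - α|
        ≤ ∑ x, (pX x * |f x - 1/(dA:ℝ)| + pX x * |α - 1/(dA:ℝ)|) := by
          apply Finset.sum_le_sum; intro x _
          rw [← mul_add]
          apply mul_le_mul_of_nonneg_left _ (hp0 x)
          calc |f x - α| ≤ |f x - 1/(dA:ℝ)| + |1/(dA:ℝ) - α| := abs_sub_le _ _ _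
            _ = |f x - 1/(dA:ℝ)| + |α - 1/(dA:ℝ)| := by rw [abs_sub_comm (1/(dA:ℝ)) α]
      _ = ∑ x, pX x * |f x - 1/(dA:ℝ)| + (∑ x, pX x) * |α - 1/(dA:ℝ)| := by
          rw [Finset.sum_add_distrib, Finset.sum_mul]
      _ ≤ 2*c*ε + 1 * (2*c*ε) := by
          apply add_le_add hA
          rw [hp1]
          exact mul_le_mul_of_nonneg_left hB zero_le_one
      _ = 4 * c * ε := by ring
  have hLHS : (1/2) * ∑ x, |pX x * f x / α - pX x| = (∑ x, pX x * |f x - α|) / (2 * α) := by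
    rw [Finset.sum_div]
    rw [Finset.mul_sum]
    apply Finset.sum_congr rfl; intro x _
    rw [show pX x * f x / α - pX x = pX x * (f x - α) / α by field_simp]
    rw [abs_div, abs_mul, abs_of_nonneg (hp0 x), abs_of_pos hαpos]
    field_simp
  rw [hLHS]
  rw [div_le_div_iff₀ (by linarith) (by linarith)]
  calc (∑ x, pX x * |f x - α|) * (δ - ε) ≤ (4*c*ε) * (δ - ε) := by
        apply mul_le_mul_of_nonneg_right hC (by linarith)
    _ ≤ 2 * ε * (2 * α) := by nlinarith

end Aux

/-- The locking encoding `E(x,k) = (1/d_B) Σ_b U_k† (|x⟩⟨x| ⊗ |b⟩⟨b|) U_k`. -/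
noncomputable def lockEnc (dA dB t : ℕ)
    (U : Fin t → Matrix (Fin dA × Fin dB) (Fin dA × Fin dB) ℂ)
    (x : Fin dA) (k : Fin t) : Matrix (Fin dA × Fin dB) (Fin dA × Fin dB) ℂ :=
  (((dB : ℝ)⁻¹ : ℝ) : ℂ) •
    ∑ b : Fin dB, (U k)ᴴ * Matrix.single (x, b) (x, b) (1 : ℂ) * U k

/-- The joint probability `P(I = i, X = x)` of the message `x` (distributed as `pX`)
and outcome `i` of the rank-one POVM `{ξ_i |e_i⟩⟨e_i|}` applied to `E(X, K)`, with the
key `K` uniform on `[t]` and independent of `X`. -/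
noncomputable def lockProbSrc (dA dB t m : ℕ)
    (U : Fin t → Matrix (Fin dA × Fin dB) (Fin dA × Fin dB) ℂ) (pX : Fin dA → ℝ)
    (ξ : Fin m → ℝ) (e : Fin m → EuclideanSpace ℂ (Fin dA × Fin dB))
    (i : Fin m) (x : Fin dA) : ℝ :=
  pX x * ((1 / (t : ℝ)) * ∑ k,
    ((((ξ i : ℝ) : ℂ) • Matrix.vecMulVec (e i) (fun p => (starRingEnd ℂ) (e i p)) *
        lockEnc dA dB t U x k).trace).re)

theorem stmt15_lockProb_eq (dA dB t m : ℕ)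
    (U : Fin t → Matrix (Fin dA × Fin dB) (Fin dA × Fin dB) ℂ) (pX : Fin dA → ℝ)
    (ξ : Fin m → ℝ) (e : Fin m → EuclideanSpace ℂ (Fin dA × Fin dB))
    (i : Fin m) (x : Fin dA) :
    lockProbSrc dA dB t m U pX ξ e i x
      = (ξ i * (dB:ℝ)⁻¹) *
        (pX x * ((1 / (t:ℝ)) * ∑ k, ∑ b, ‖(U k).mulVec (e i) (x,b)‖^2)) := by
  have hk : ∀ k, ((((ξ i : ℝ) : ℂ) • Matrix.vecMulVec (e i) (fun p => (starRingEnd ℂ) (e i p)) *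
        lockEnc dA dB t U x k).trace).re
      = ξ i * (dB:ℝ)⁻¹ * ∑ b, ‖(U k).mulVec (e i) (x,b)‖^2 := by
    intro k
    rw [lockEnc, Matrix.smul_mul, Matrix.mul_smul, Matrix.mul_sum]
    rw [Matrix.trace_smul, Matrix.trace_smul, Matrix.trace_sum]
    have : ∀ b : Fin dB, (Matrix.vecMulVec (e i) (fun p => (starRingEnd ℂ) (e i p)) *
        ((U k)ᴴ * Matrix.single (x,b) (x,b) (1:ℂ) * U k)).trace
        = (‖(U k).mulVec (e i) (x,b)‖^2 : ℝ) := fun b => stmt15_trace_key (U k) (e i) (x,b)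
    simp only [this, smul_eq_mul]
    rw [show (∑ b, ((‖(U k).mulVec (e i) (x,b)‖^2 : ℝ) : ℂ))
        = ((∑ b, ‖(U k).mulVec (e i) (x,b)‖^2 : ℝ) : ℂ) from (Complex.ofReal_sum _ _).symm,
      ← Complex.ofReal_mul, ← Complex.ofReal_mul, Complex.ofReal_re, mul_assoc]
  rw [lockProbSrc]
  simp only [hk]
  rw [← Finset.mul_sum]
  ring

/-- Locking for min-entropy sources: with `{U_k}` satisfying an
`ε`-metric uncertainty relation on `A` (`d_A = 2^n`) and the encoding
`E(x,k) = (1/d_B) Σ_b U_k†(|x⟩⟨x|⊗|b⟩⟨b|)U_k`, if the message `X` has min-entropy at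
least `ℓ` with `2^{ℓ−n} > ε`, then for any rank-one POVM measurement with outcome `I`
and any outcome `i` of positive probability,
`Δ(p_{X|I=i}, p_X) ≤ 2ε/(2^{ℓ−n} − ε)`. -/
theorem stmt15 (n dA dB t : ℕ) (hdA : dA = 2 ^ n) (hB : 0 < dB) (ht : 0 < t)
    (ε : ℝ) (hε : 0 < ε) (hε1 : ε < 1)
    (U : Fin t → Matrix (Fin dA × Fin dB) (Fin dA × Fin dB) ℂ)
    (hU : ∀ k, U k ∈ Matrix.unitaryGroup (Fin dA × Fin dB) ℂ)
    (hMUR : ∀ ψ : EuclideanSpace ℂ (Fin dA × Fin dB), ‖ψ‖ = 1 →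
      (1 / (t : ℝ)) * ∑ k, (1 / 2) * ∑ a : Fin dA,
          |(∑ b : Fin dB, ‖(U k).mulVec ψ (a, b)‖ ^ 2) - 1 / (dA : ℝ)| ≤ ε)
    (ℓ : ℝ) (hℓ0 : 0 ≤ ℓ) (hℓn : ℓ ≤ n) (hℓε : ε < (2 : ℝ) ^ (ℓ - n))
    (pX : Fin dA → ℝ) (hpX0 : ∀ x, 0 ≤ pX x) (hpX1 : ∑ x, pX x = 1)
    (hmin : ∀ x, pX x ≤ (2 : ℝ) ^ (-ℓ)) :
    ∀ (m : ℕ) (ξ : Fin m → ℝ) (e : Fin m → EuclideanSpace ℂ (Fin dA × Fin dB)),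
      (∀ i, 0 < ξ i) → (∀ i, ‖e i‖ = 1) →
      (∑ i, ((ξ i : ℝ) : ℂ) •
          Matrix.vecMulVec (e i) (fun p => (starRingEnd ℂ) (e i p)) = 1) →
      ∀ i : Fin m, 0 < ∑ x, lockProbSrc dA dB t m U pX ξ e i x →
        (1 / 2) * ∑ x : Fin dA,
            |lockProbSrc dA dB t m U pX ξ e i x /
                (∑ x', lockProbSrc dA dB t m U pX ξ e i x') - pX x|
          ≤ 2 * ε / ((2 : ℝ) ^ (ℓ - n) - ε) := by
  intro m ξ e hξ he hPOVM i hpos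
  have hdA0 : 0 < dA := by rw [hdA]; positivity
  -- the induced distribution on A
  set f : Fin dA → ℝ :=
    fun a => (1 / (t:ℝ)) * ∑ k, ∑ b, ‖(U k).mulVec (e i) (a,b)‖^2 with hf
  have ht0 : (t:ℝ) ≠ 0 := Nat.cast_ne_zero.mpr ht.ne'
  -- Σ_p ‖e i p‖² = 1
  have hnorm : ∑ p, ‖(e i) p‖^2 = 1 := by
    have h := he i
    rw [EuclideanSpace.norm_eq] at h
    have h0 : (0:ℝ) ≤ ∑ p, ‖(e i) p‖^2 := by positivity
    have h2 := Real.sq_sqrt h0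
    rw [h] at h2
    simpa using h2.symm
  -- Σ f = 1
  have hf1 : ∑ a, f a = 1 := by
    rw [hf]
    simp only
    rw [← Finset.mul_sum, Finset.sum_comm]
    have hk : ∀ k : Fin t, (∑ a : Fin dA, ∑ b : Fin dB, ‖(U k).mulVec (e i) (a,b)‖^2) = 1 := by
      intro k
      rw [show (∑ a : Fin dA, ∑ b : Fin dB, ‖(U k).mulVec (e i) (a,b)‖^2)
          = ∑ p : Fin dA × Fin dB, ‖(U k).mulVec (e i) p‖^2 from (Fintype.sum_prod_type (f := fun p : Fin dA × Fin dB => ‖(U k).mulVec (e i) p‖^2)).symm]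
      rw [stmt15_unit_norm_pres (U k) (hU k) (e i)]
      exact hnorm
    simp only [hk]
    simp [ht0]
  -- MUR for f
  have hfMUR : (1/2) * ∑ a, |f a - 1/(dA:ℝ)| ≤ ε := by
    have hM := hMUR (e i) (he i)
    have hpt : ∀ a, |f a - 1/(dA:ℝ)|
        ≤ (1/(t:ℝ)) * ∑ k, |(∑ b, ‖(U k).mulVec (e i) (a,b)‖^2) - 1/(dA:ℝ)| := by
      intro a
      have heq : f a - 1/(dA:ℝ)
          = (1/(t:ℝ)) * ∑ k, ((∑ b, ‖(U k).mulVec (e i) (a,b)‖^2) - 1/(dA:ℝ)) := by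
        rw [Finset.sum_sub_distrib, mul_sub, hf]
        simp only
        congr 1
        rw [Finset.sum_const, Finset.card_univ, Fintype.card_fin, nsmul_eq_mul]
        field_simp
      rw [heq, abs_mul, abs_of_nonneg (by positivity : (0:ℝ) ≤ 1/(t:ℝ))]
      exact mul_le_mul_of_nonneg_left (Finset.abs_sum_le_sum_abs _ _) (by positivity)
    calc (1/2) * ∑ a, |f a - 1/(dA:ℝ)|
        ≤ (1/2) * ∑ a, (1/(t:ℝ)) * ∑ k, |(∑ b, ‖(U k).mulVec (e i) (a,b)‖^2) - 1/(dA:ℝ)| := by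
          apply mul_le_mul_of_nonneg_left _ (by norm_num)
          exact Finset.sum_le_sum (fun a _ => hpt a)
      _ = (1/(t:ℝ)) * ∑ k, (1/2) * ∑ a, |(∑ b, ‖(U k).mulVec (e i) (a,b)‖^2) - 1/(dA:ℝ)| := by
          rw [← Finset.mul_sum, ← Finset.mul_sum, Finset.sum_comm]
          ring
      _ ≤ ε := hM
  -- rewrite the goal in terms of f
  have hC : (0:ℝ) < ξ i * (dB:ℝ)⁻¹ := by
    apply mul_pos (hξ i)
    positivity
  have hlp : ∀ x, lockProbSrc dA dB t m U pX ξ e i x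
      = (ξ i * (dB:ℝ)⁻¹) * (pX x * f x) :=
    fun x => stmt15_lockProb_eq dA dB t m U pX ξ e i x
  have hratio : ∀ x, lockProbSrc dA dB t m U pX ξ e i x /
      (∑ x', lockProbSrc dA dB t m U pX ξ e i x')
      = pX x * f x / (∑ x', pX x' * f x') := by
    intro x
    simp only [hlp]
    rw [← Finset.mul_sum]
    exact mul_div_mul_left _ _ (ne_of_gt hC)
  simp only [hratio]
  -- apply the real core lemma
  have hcδ : (2:ℝ)^(-ℓ) * (2:ℝ)^(ℓ - n) = 1/(dA:ℝ) := by
    rw [← Real.rpow_add (by norm_num : (0:ℝ) < 2)]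
    rw [show -ℓ + (ℓ - (n:ℝ)) = -(n:ℝ) by ring]
    rw [Real.rpow_neg (by norm_num : (0:ℝ) ≤ 2), Real.rpow_natCast]
    rw [hdA]
    push_cast
    field_simp
  exact stmt15_core_real dA hdA0 ε ((2:ℝ)^(ℓ-n)) ((2:ℝ)^(-ℓ)) hε hℓε
    (Real.rpow_pos_of_pos (by norm_num) _) hcδ f pX hf1 hfMUR hpX0 hpX1 hmin
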